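/- arXiv:2305.03824 — 5 statements merged into one kernel-verified Lean document; each statement's English description precedes it below -/
import Mathlib

section
/- Let X be a nonempty finite set, n ∈ ℕ, and let f_i, l_i, u_i : X → ℝ for i ∈ {0,1,…,n} satisfy l_i(x) ≤ f_i(x) ≤ u_i(x) for all i and all x ∈ X. Suppose there exists x* ∈ X with f_i(x*) ≥ 0 for all i ∈ {1,…,n} and f_0(x*) ≥ f_0(x) for every x ∈ X with f_i(x) ≥ 0 for all i ∈ {1,…,n}. Then: (i) the set S = { x ∈ X : u_i(x) ≥ 0 for all i ∈ {1,…,n} } is nonempty; and (ii) for any x' ∈ S with u_0(x') ≥ u_0(x) for all x ∈ S, one has [f_0(x*) − f_0(x')]⁺ ≤ u_0(x') − l_0(x') and [−f_i(x')]⁺ ≤ u_i(x') − l_i(x') for every i ∈ {1,…,n}. -/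
/-- Deterministic core of Lemma 2 of the paper: given brackets `l_i ≤ f_i ≤ u_i`,
a feasible maximizer `x*`, the relaxed feasible set `{x : u_i(x) ≥ 0 ∀i}` is nonempty,
and any maximizer `x'` of `u_0` over it has positive regret and constraint violations
bounded by the corresponding bound widths. -/
theorem lemma2_deterministic_core {X : Type*} [Fintype X] [Nonempty X] (n : ℕ)
    (f₀ l₀ u₀ : X → ℝ) (f l u : Fin n → X → ℝ)
    (hbr₀ : ∀ x, l₀ x ≤ f₀ x ∧ f₀ x ≤ u₀ x)
    (hbr : ∀ i x, l i x ≤ f i x ∧ f i x ≤ u i x)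
    (xstar : X) (hfeas : ∀ i, 0 ≤ f i xstar)
    (hopt : ∀ x, (∀ i, 0 ≤ f i x) → f₀ x ≤ f₀ xstar) :
    (∃ x, ∀ i, 0 ≤ u i x) ∧
      ∀ x' : X, (∀ i, 0 ≤ u i x') → (∀ x, (∀ i, 0 ≤ u i x) → u₀ x ≤ u₀ x') →
        max (f₀ xstar - f₀ x') 0 ≤ u₀ x' - l₀ x' ∧
          ∀ i, max (-(f i x')) 0 ≤ u i x' - l i x' := by
  have hstar : ∀ i, 0 ≤ u i xstar := fun i => le_trans (hfeas i) (hbr i xstar).2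
  refine ⟨⟨xstar, hstar⟩, fun x' hx' hmax => ?_⟩
  constructor
  · have h1 : f₀ xstar ≤ u₀ xstar := (hbr₀ xstar).2
    have h2 : u₀ xstar ≤ u₀ x' := hmax xstar hstar
    have h3 : l₀ x' ≤ f₀ x' := (hbr₀ x').1
    have : f₀ xstar - f₀ x' ≤ u₀ x' - l₀ x' := by linarith
    exact max_le this (by linarith [(hbr₀ x').1, (hbr₀ x').2])
  · intro i
    have h1 : l i x' ≤ f i x' := (hbr i x').1
    have h2 : 0 ≤ u i x' := hx' i
    exact max_le (by linarith) (by linarith [(hbr i x').2])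
end

section
/- Let X be a nonempty finite set, n ∈ ℕ, and let f_i, l_i, u_i : X → ℝ for i ∈ {0,1,…,n} satisfy l_i(x) ≤ f_i(x) ≤ u_i(x) for all i and all x ∈ X. Suppose the set A = { x ∈ X : l_i(x) ≥ 0 for all i ∈ {1,…,n} } is nonempty, let l* = max_{x ∈ A} l_0(x), and let f* = max{ f_0(x) : x ∈ X, f_i(x) ≥ 0 for all i ∈ {1,…,n} } (this feasible set is nonempty since it contains A). If ρ ≥ 0 satisfies u_0(x) − ρ Σ_{i=1}^n [−u_i(x)]⁺ ≤ l* for every x ∈ X, then f_0(x) − ρ Σ_{i=1}^n [−f_i(x)]⁺ ≤ f* for every x ∈ X. -/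
/-- Deterministic core of Corollary 1 of the paper: if the objective and constraints are
bracketed by `l_i ≤ f_i ≤ u_i`, the pessimistic feasible set `A = {x : l_i(x) ≥ 0 ∀i}`
is nonempty, `l* = max_{x ∈ A} l₀(x)`, `f* = max{f₀(x) : f_i(x) ≥ 0 ∀i}`, and
`ρ ≥ 0` satisfies `u₀(x) − ρ Σᵢ [−uᵢ(x)]⁺ ≤ l*` for all `x`, then
`f₀(x) − ρ Σᵢ [−fᵢ(x)]⁺ ≤ f*` for all `x` (exact penalty property). -/
theorem exact_penalty_of_quantile_condition {X : Type*} [Fintype X] [Nonempty X] (n : ℕ)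
    (f₀ l₀ u₀ : X → ℝ) (f l u : Fin n → X → ℝ)
    (hbr₀ : ∀ x, l₀ x ≤ f₀ x ∧ f₀ x ≤ u₀ x)
    (hbr : ∀ i x, l i x ≤ f i x ∧ f i x ≤ u i x)
    (hA : ∃ x, ∀ i, 0 ≤ l i x)
    (ρ : ℝ) (hρ : 0 ≤ ρ)
    (lstar : ℝ) (hlstar : lstar = sSup (l₀ '' {x | ∀ i, 0 ≤ l i x}))
    (fstar : ℝ) (hfstar : fstar = sSup (f₀ '' {x | ∀ i, 0 ≤ f i x}))
    (hcond : ∀ x, u₀ x - ρ * ∑ i, max (-(u i x)) 0 ≤ lstar) :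
    ∀ x, f₀ x - ρ * ∑ i, max (-(f i x)) 0 ≤ fstar := by
  -- lstar ≤ fstar
  have hBdd : BddAbove (f₀ '' {x | ∀ i, 0 ≤ f i x}) :=
    (Set.Finite.image _ (Set.toFinite _)).bddAbove
  have hlf : lstar ≤ fstar := by
    rw [hlstar, hfstar]
    obtain ⟨x₀, hx₀⟩ := hA
    apply csSup_le (Set.Nonempty.image l₀ (⟨x₀, hx₀⟩ : Set.Nonempty {x | ∀ i, 0 ≤ l i x}))
    rintro v ⟨x, hx, rfl⟩
    have hfx : x ∈ {x | ∀ i, 0 ≤ f i x} := fun i => (hx i).trans (hbr i x).1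
    exact le_trans (hbr₀ x).1 (le_csSup hBdd ⟨x, hfx, rfl⟩)
  intro x
  have hsum : ∑ i, max (-(u i x)) 0 ≤ ∑ i, max (-(f i x)) 0 := by
    apply Finset.sum_le_sum
    intro i _
    exact max_le_max (neg_le_neg (hbr i x).2) le_rfl
  have h1 : f₀ x - ρ * ∑ i, max (-(f i x)) 0 ≤ u₀ x - ρ * ∑ i, max (-(u i x)) 0 := by
    have := mul_le_mul_of_nonneg_left hsum hρ
    linarith [(hbr₀ x).2]
  exact h1.trans ((hcond x).trans hlf)
end

section
/- Let X be a set, n ∈ ℕ, f_i : X → ℝ for i ∈ {0,1,…,n}, and let f* ∈ ℝ and ρ ≥ 0 be such that f_0(x) − ρ Σ_{i=1}^n [−f_i(x)]⁺ ≤ f* for every x ∈ X. Let T ≥ 1, let x_1,…,x_T ∈ X, and let real numbers l_{i,t−1}(x_t) for i ∈ {0,…,n} and t ∈ {1,…,T} satisfy l_{i,t−1}(x_t) ≤ f_i(x_t) for all i and t. Let t* ∈ {1,…,T} maximize t ↦ l_{0,t−1}(x_t) − ρ Σ_{i=1}^n [−l_{i,t−1}(x_t)]⁺. Then 0 ≤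 f* − f_0(x_{t*}) + ρ Σ_{i=1}^n [−f_i(x_{t*})]⁺ ≤ (1/T) Σ_{t=1}^T ( f* − l_{0,t−1}(x_t) + ρ Σ_{i=1}^n [−l_{i,t−1}(x_t)]⁺ ). -/
/-- Deterministic core of Theorem 4 of the paper: under the exact penalty property with
weight `ρ` and optimal value `f*`, the point `x_{t*}` recommended by maximizing the
penalized lower bound `l₀_{t−1}(x_t) − ρ Σᵢ [−lᵢ_{t−1}(x_t)]⁺` has penalty-based regret
bounded between `0` and the average pessimistic penalty-based regret. -/
theorem recommended_point_regret_bound {X : Type*} (n : ℕ)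
    (f₀ : X → ℝ) (f : Fin n → X → ℝ) (fstar ρ : ℝ) (hρ : 0 ≤ ρ)
    (hexact : ∀ x, f₀ x - ρ * ∑ i, max (-(f i x)) 0 ≤ fstar)
    (T : ℕ) (hT : 1 ≤ T) (x : Fin T → X)
    (l₀ : Fin T → ℝ) (l : Fin n → Fin T → ℝ)
    (hl₀ : ∀ t, l₀ t ≤ f₀ (x t)) (hl : ∀ i t, l i t ≤ f i (x t))
    (tstar : Fin T)
    (htstar : ∀ t, l₀ t - ρ * ∑ i, max (-(l i t)) 0 ≤
      l₀ tstar - ρ * ∑ i, max (-(l i tstar)) 0) :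
    0 ≤ fstar - f₀ (x tstar) + ρ * ∑ i, max (-(f i (x tstar))) 0 ∧
      fstar - f₀ (x tstar) + ρ * ∑ i, max (-(f i (x tstar))) 0 ≤
        (1 / (T : ℝ)) * ∑ t, (fstar - l₀ t + ρ * ∑ i, max (-(l i t)) 0) := by
  have key : fstar - f₀ (x tstar) + ρ * ∑ i, max (-(f i (x tstar))) 0 ≤
      fstar - (l₀ tstar - ρ * ∑ i, max (-(l i tstar)) 0) := by
    have h1 : l₀ tstar ≤ f₀ (x tstar) := hl₀ tstar
    have h2 : ∑ i, max (-(f i (x tstar))) 0 ≤ ∑ i, max (-(l i tstar)) 0 :=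
      Finset.sum_le_sum fun i _ => max_le_max (neg_le_neg (hl i tstar)) le_rfl
    nlinarith [mul_le_mul_of_nonneg_left h2 hρ]
  constructor
  · have := hexact (x tstar)
    linarith
  · have hTpos : (0:ℝ) < T := by exact_mod_cast hT
    have hmean : (T : ℝ) * (fstar - (l₀ tstar - ρ * ∑ i, max (-(l i tstar)) 0)) ≤
        ∑ t, (fstar - l₀ t + ρ * ∑ i, max (-(l i t)) 0) := by
      calc (T : ℝ) * (fstar - (l₀ tstar - ρ * ∑ i, max (-(l i tstar)) 0))
          = ∑ _t : Fin T, (fstar - (l₀ tstar - ρ * ∑ i, max (-(l i tstar)) 0)) := by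
            simp [Finset.sum_const, mul_comm]
            ring
        _ ≤ ∑ t, (fstar - l₀ t + ρ * ∑ i, max (-(l i t)) 0) := by
            refine Finset.sum_le_sum fun t _ => ?_
            have := htstar t
            linarith
    rw [div_mul_eq_mul_div, one_mul, le_div_iff₀ hTpos]
    nlinarith
end

section
/- Let X be a nonempty finite set, n ∈ ℕ, T ≥ 1, let f_i : X → ℝ for i ∈ {0,…,n}, and for each t ∈ {0,…,T−1} let l_{i,t}, u_{i,t} : X → ℝ satisfy l_{i,t}(x) ≤ f_i(x) ≤ u_{i,t}(x) for all i, t, x. Suppose x* ∈ X satisfies f_i(x*) ≥ 0 for all i ∈ {1,…,n} and f_0(x*) ≥ f_0(x) for every x ∈ X with f_i(x) ≥ 0 for all i ∈ {1,…,n}. For each t ∈ {0,…,T−1}, let x_{t+1} maximize u_{0,t} over S_t = { x ∈ X : u_{i,t}(x) ≥ 0 for all i ∈ {1,…,n} } (each S_t is nonempty since it contains x*). Then, writing w_{i,t}(x) = u_{i,t}(x) − l_{i,t}(x), the following cumulative bounds hold: Σ_{t=0}^{T−1} [f_0(x*) − f_0(x_{t+1})]⁺ ≤ Σ_{t=0}^{T−1}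 w_{0,t}(x_{t+1}), and for each i ∈ {1,…,n}, Σ_{t=0}^{T−1} [−f_i(x_{t+1})]⁺ ≤ Σ_{t=0}^{T−1} w_{i,t}(x_{t+1}). -/
/-- Deterministic core of Theorem 2 of the paper: if all objective and constraint
functions are bracketed by time-indexed lower and upper bounds, `x*` is a feasible
maximizer, and each `x_{t+1} = xs t` maximizes `u₀_t` over the relaxed feasible set
`S_t = {x : uᵢ_t(x) ≥ 0 ∀i}`, then the cumulative positive regret and each cumulative
constraint violation are bounded by the corresponding cumulative bound widths. -/
theorem cumulative_regret_and_violation_bounds {X : Type*} [Fintype X] [Nonempty X]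
    (n T : ℕ) (hT : 1 ≤ T)
    (f₀ : X → ℝ) (f : Fin n → X → ℝ)
    (l₀ u₀ : Fin T → X → ℝ) (l u : Fin n → Fin T → X → ℝ)
    (hbr₀ : ∀ t x, l₀ t x ≤ f₀ x ∧ f₀ x ≤ u₀ t x)
    (hbr : ∀ i t x, l i t x ≤ f i x ∧ f i x ≤ u i t x)
    (xstar : X) (hfeas : ∀ i, 0 ≤ f i xstar)
    (hopt : ∀ x, (∀ i, 0 ≤ f i x) → f₀ x ≤ f₀ xstar)
    (xs : Fin T → X)
    (hxs : ∀ t, (∀ i, 0 ≤ u i t (xs t)) ∧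
      ∀ x, (∀ i, 0 ≤ u i t x) → u₀ t x ≤ u₀ t (xs t)) :
    (∑ t, max (f₀ xstar - f₀ (xs t)) 0 ≤ ∑ t, (u₀ t (xs t) - l₀ t (xs t))) ∧
      ∀ i, ∑ t, max (-(f i (xs t))) 0 ≤ ∑ t, (u i t (xs t) - l i t (xs t)) := by
  constructor
  · apply Finset.sum_le_sum
    intro t _
    have h1 : f₀ xstar ≤ u₀ t (xs t) := by
      have hstar : ∀ i, 0 ≤ u i t xstar := fun i =>
        le_trans (hfeas i) (hbr i t xstar).2
      exact le_trans (hbr₀ t xstar).2 ((hxs t).2 xstar hstar)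
    have h2 : l₀ t (xs t) ≤ f₀ (xs t) := (hbr₀ t (xs t)).1
    have h3 : l₀ t (xs t) ≤ u₀ t (xs t) := le_trans h2 (hbr₀ t (xs t)).2
    apply max_le <;> linarith
  · intro i
    apply Finset.sum_le_sum
    intro t _
    have h1 : 0 ≤ u i t (xs t) := (hxs t).1 i
    have h2 : l i t (xs t) ≤ f i (xs t) := (hbr i t (xs t)).1
    have h3 : f i (xs t) ≤ u i t (xs t) := (hbr i t (xs t)).2
    apply max_le <;> linarith
end

section
/- Let X be a nonempty finite set, n ∈ ℕ, T ≥ 1, let f_i : X → ℝ for i ∈ {0,…,n}, and for each t ∈ {0,…,T−1} let l_{i,t}, u_{i,t} : X → ℝ satisfy l_{i,t}(x) ≤ f_i(x) ≤ u_{i,t}(x) for all i, t, x. Suppose x* ∈ X satisfies f_i(x*) ≥ 0 for all i ∈ {1,…,n} and f_0(x*) ≥ f_0(x) for every x ∈ X with f_i(x) ≥ 0 for all i ∈ {1,…,n}. For each t ∈ {0,…,T−1}, let x_{t+1} maximize u_{0,t} over S_t = { x ∈ X : u_{i,t}(x) ≥ 0 for all i ∈ {1,…,n} }. Set B = Σ_{t=0}^{T−1}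 Σ_{i=0}^{n} ( u_{i,t}(x_{t+1}) − l_{i,t}(x_{t+1}) ). Then there exists t̃ ∈ {1,…,T} such that f_0(x*) − f_0(x_{t̃}) ≤ B/T and [−f_i(x_{t̃})]⁺ ≤ B/T for every i ∈ {1,…,n}. -/
/-- Deterministic core of Theorem 3 of the paper: under the bracketing, feasibility,
optimality, and acquisition-maximization hypotheses, with
`B = Σ_t Σ_{i=0}^n (uᵢ_t(x_{t+1}) − lᵢ_t(x_{t+1}))` the total cumulative bound width,
there exists a point `x_{t̃}` in the sampled sequence whose optimality gap and every
constraint violation are simultaneously bounded by `B/T`. -/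
theorem exists_point_with_average_bounds {X : Type*} [Fintype X] [Nonempty X]
    (n T : ℕ) (hT : 1 ≤ T)
    (f₀ : X → ℝ) (f : Fin n → X → ℝ)
    (l₀ u₀ : Fin T → X → ℝ) (l u : Fin n → Fin T → X → ℝ)
    (hbr₀ : ∀ t x, l₀ t x ≤ f₀ x ∧ f₀ x ≤ u₀ t x)
    (hbr : ∀ i t x, l i t x ≤ f i x ∧ f i x ≤ u i t x)
    (xstar : X) (hfeas : ∀ i, 0 ≤ f i xstar)
    (hopt : ∀ x, (∀ i, 0 ≤ f i x) → f₀ x ≤ f₀ xstar)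
    (xs : Fin T → X)
    (hxs : ∀ t, (∀ i, 0 ≤ u i t (xs t)) ∧
      ∀ x, (∀ i, 0 ≤ u i t x) → u₀ t x ≤ u₀ t (xs t))
    (B : ℝ)
    (hB : B = ∑ t, ((u₀ t (xs t) - l₀ t (xs t)) +
      ∑ i, (u i t (xs t) - l i t (xs t)))) :
    ∃ t : Fin T, f₀ xstar - f₀ (xs t) ≤ B / T ∧
      ∀ i, max (-(f i (xs t))) 0 ≤ B / T := by
  set w : Fin T → ℝ := fun t => (u₀ t (xs t) - l₀ t (xs t)) +
      ∑ i, (u i t (xs t) - l i t (xs t)) with hw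
  have hTpos : (0 : ℝ) < T := by exact_mod_cast hT
  have hwsum : ∀ t : Fin T, 0 ≤ ∑ i, (u i t (xs t) - l i t (xs t)) :=
    fun t => Finset.sum_nonneg fun i _ => by
      have h := hbr i t (xs t); linarith [h.1, h.2]
  -- there exists t with w t ≤ B / T
  have hne : (Finset.univ : Finset (Fin T)).Nonempty := by
    haveI : NeZero T := ⟨by omega⟩
    exact Finset.univ_nonempty
  obtain ⟨t, -, ht⟩ := Finset.exists_le_of_sum_le (f := w) hne (g := fun _ : Fin T => B / T)
    (by
      have : ∑ _t : Fin T, B / T = B := by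
        rw [Finset.sum_const, Finset.card_univ, Fintype.card_fin, nsmul_eq_mul]
        field_simp
      rw [this, hB])
  refine ⟨t, ?_, ?_⟩
  · -- optimality gap
    have h1 : u₀ t xstar ≤ u₀ t (xs t) := (hxs t).2 xstar fun i =>
      le_trans (hfeas i) (hbr i t xstar).2
    have h2 := (hbr₀ t xstar).2
    have h3 := (hbr₀ t (xs t)).1
    calc f₀ xstar - f₀ (xs t) ≤ u₀ t (xs t) - l₀ t (xs t) := by linarith
      _ ≤ w t := by
          have h := hwsum t
          have hwt : w t = (u₀ t (xs t) - l₀ t (xs t)) +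
              ∑ i, (u i t (xs t) - l i t (xs t)) := rfl
          linarith
      _ ≤ B / T := ht
  · intro i
    have hui : 0 ≤ u i t (xs t) := (hxs t).1 i
    have hb := hbr i t (xs t)
    have key : max (-(f i (xs t))) 0 ≤ u i t (xs t) - l i t (xs t) := by
      apply max_le <;> linarith [hb.1, hb.2]
    refine le_trans key (le_trans ?_ ht)
    have hsingle : u i t (xs t) - l i t (xs t) ≤ ∑ j, (u j t (xs t) - l j t (xs t)) :=
      Finset.single_le_sum (f := fun j => u j t (xs t) - l j t (xs t))
        (fun j _ => by have h := hbr j t (xs t); linarith [h.1, h.2])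
        (Finset.mem_univ i)
    have h0 : 0 ≤ u₀ t (xs t) - l₀ t (xs t) := by
      have h := hbr₀ t (xs t); linarith [h.1, h.2]
    simp only [hw]; linarith
end
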